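/- arXiv:2007.05375 — 2 statements merged into one kernel-verified Lean document; each statement's English description precedes it below -/
import Mathlib

section
/- There is no alternative O-bimodule structure on the conjugate regular left O-module O̅. That is, there exists no R-bilinear right multiplication R : O̅ × O → O̅ with x·1 = x making O̅ (with left action p·̂x := p̄x) into an alternative bimodule, i.e., satisfying [p,q,x] = [q,x,p] = [x,p,q] for all p,q ∈ O and x ∈ O̅, where the associators use the left action p·̂x = p̄x. -/
noncomputable section

open scoped Quaternion

/-- The octonions, built from pairs of quaternions via the Cayley–Dickson construction. -/
def Octonion : Type := ℍ[ℝ] × ℍ[ℝ]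

namespace Octonion

def mk' (a b : ℍ[ℝ]) : Octonion := Prod.mk a b
def q1 (x : Octonion) : ℍ[ℝ] := Prod.fst x
def q2 (x : Octonion) : ℍ[ℝ] := Prod.snd x

instance : AddCommGroup Octonion := inferInstanceAs (AddCommGroup (ℍ[ℝ] × ℍ[ℝ]))
instance : Module ℝ Octonion := inferInstanceAs (Module ℝ (ℍ[ℝ] × ℍ[ℝ]))
instance : One Octonion := ⟨mk' 1 0⟩
instance : Mul Octonion :=
  ⟨fun x y => mk' (q1 x * q1 y - star (q2 y) * q2 x) (q2 y * q1 x + q2 x * star (q1 y))⟩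

/-- Octonion conjugation. -/
def conj (x : Octonion) : Octonion := mk' (star (q1 x)) (-(q2 x))

/-- The real part of an octonion. -/
def re (x : Octonion) : ℝ := (q1 x).re

/-- The standard basis `e 0 = 1, e 1, …, e 7` of the octonions. -/
def e : Fin 8 → Octonion :=
  ![mk' 1 0, mk' ⟨0,1,0,0⟩ 0, mk' ⟨0,0,1,0⟩ 0, mk' ⟨0,0,0,1⟩ 0,
    mk' 0 1, mk' 0 ⟨0,1,0,0⟩, mk' 0 ⟨0,0,1,0⟩, mk' 0 ⟨0,0,0,1⟩]

/-- The coordinates of an octonion with respect to the standard basis. -/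
def coord (x : Octonion) : Fin 8 → ℝ :=
  ![(q1 x).re, (q1 x).imI, (q1 x).imJ, (q1 x).imK,
    (q2 x).re, (q2 x).imI, (q2 x).imJ, (q2 x).imK]

end Octonion

section Aux
open Octonion

private lemma oq1_mk (a b : ℍ[ℝ]) : q1 (mk' a b) = a := rfl
private lemma oq2_mk (a b : ℍ[ℝ]) : q2 (mk' a b) = b := rfl
private lemma omul_q1 (x y : Octonion) : q1 (x*y) = q1 x * q1 y - star (q2 y) * q2 x := rfl
private lemma omul_q2 (x y : Octonion) : q2 (x*y) = q2 y * q1 x + q2 x * star (q1 y) := rfl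
private lemma oconj_q1 (x : Octonion) : q1 (conj x) = star (q1 x) := rfl
private lemma oconj_q2 (x : Octonion) : q2 (conj x) = -(q2 x) := rfl
private lemma oone_q1 : q1 (1 : Octonion) = 1 := rfl
private lemma oone_q2 : q2 (1 : Octonion) = 0 := rfl
private lemma osub_q1 (x y : Octonion) : q1 (x - y) = q1 x - q1 y := rfl
private lemma osub_q2 (x y : Octonion) : q2 (x - y) = q2 x - q2 y := rfl
private lemma oadd_q1 (x y : Octonion) : q1 (x + y) = q1 x + q1 y := rfl
private lemma oadd_q2 (x y : Octonion) : q2 (x + y) = q2 x + q2 y := rfl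
private lemma oneg_q1 (x : Octonion) : q1 (-x) = -q1 x := rfl
private lemma oneg_q2 (x : Octonion) : q2 (-x) = -q2 x := rfl
private lemma osmul_q1 (r : ℝ) (x : Octonion) : q1 (r • x) = r • q1 x := rfl
private lemma osmul_q2 (r : ℝ) (x : Octonion) : q2 (r • x) = r • q2 x := rfl
private lemma ozero_q1 : q1 (0 : Octonion) = 0 := rfl
private lemma ozero_q2 : q2 (0 : Octonion) = 0 := rfl
private lemma oe1 : q2 (e 1) = 0 ∧ (q1 (e 1)).re = 0 ∧ (q1 (e 1)).imI = 1 ∧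
    (q1 (e 1)).imJ = 0 ∧ (q1 (e 1)).imK = 0 := ⟨rfl, rfl, rfl, rfl, rfl⟩
private lemma oe2 : q2 (e 2) = 0 ∧ (q1 (e 2)).re = 0 ∧ (q1 (e 2)).imI = 0 ∧
    (q1 (e 2)).imJ = 1 ∧ (q1 (e 2)).imK = 0 := ⟨rfl, rfl, rfl, rfl, rfl⟩
private lemma oe4 : e 4 = mk' 0 1 := rfl
private lemma oe4' : q1 (e 4) = 0 ∧ q2 (e 4) = 1 := ⟨rfl, rfl⟩

private lemma oext {x y : Octonion} (h1 : q1 x = q1 y) (h2 : q2 x = q2 y) : x = y :=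
  Prod.ext h1 h2
private lemma oext_iff {x y : Octonion} : x = y ↔ q1 x = q1 y ∧ q2 x = q2 y :=
  Prod.ext_iff

private lemma qmk_re (a b c d : ℝ) : (⟨a,b,c,d⟩ : ℍ[ℝ]).re = a := rfl
private lemma qmk_imI (a b c d : ℝ) : (⟨a,b,c,d⟩ : ℍ[ℝ]).imI = b := rfl
private lemma qmk_imJ (a b c d : ℝ) : (⟨a,b,c,d⟩ : ℍ[ℝ]).imJ = c := rfl
private lemma qmk_imK (a b c d : ℝ) : (⟨a,b,c,d⟩ : ℍ[ℝ]).imK = d := rfl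

/-- The particular solution `T x = 2 re(x) e₁ - 2 x₁ 1` of the commutation equations. -/
private def T (x : Octonion) : Octonion := mk' ⟨-2*(q1 x).imI, 2*(q1 x).re, 0, 0⟩ 0
private lemma oT (x : Octonion) : q2 (T x) = 0 ∧ (q1 (T x)).re = -2*(q1 x).imI ∧
    (q1 (T x)).imI = 2*(q1 x).re ∧ (q1 (T x)).imJ = 0 ∧ (q1 (T x)).imK = 0 :=
  ⟨rfl, rfl, rfl, rfl, rfl⟩

attribute [local simp] oq1_mk oq2_mk omul_q1 omul_q2 oconj_q1 oconj_q2 oone_q1 oone_q2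
  osub_q1 osub_q2 oadd_q1 oadd_q2 oneg_q1 oneg_q2 osmul_q1 osmul_q2 ozero_q1 ozero_q2
  qmk_re qmk_imI qmk_imJ qmk_imK
  Quaternion.re_mul Quaternion.imI_mul Quaternion.imJ_mul Quaternion.imK_mul
  Quaternion.re_star Quaternion.imI_star Quaternion.imJ_star Quaternion.imK_star
  Quaternion.re_sub Quaternion.imI_sub Quaternion.imJ_sub Quaternion.imK_sub
  Quaternion.re_add Quaternion.imI_add Quaternion.imJ_add Quaternion.imK_add
  Quaternion.re_neg Quaternion.imI_neg Quaternion.imJ_neg Quaternion.imK_neg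
  Quaternion.re_smul Quaternion.imI_smul Quaternion.imJ_smul Quaternion.imK_smul
  Quaternion.re_one Quaternion.imI_one Quaternion.imJ_one Quaternion.imK_one
  Quaternion.re_zero Quaternion.imI_zero Quaternion.imJ_zero Quaternion.imK_zero

private lemma oconj_conj (c : Octonion) : conj (conj c) = c := by
  refine oext ?_ ?_ <;> simp

private lemma omul_one (c : Octonion) : c * 1 = c := by
  refine oext ?_ ?_ <;> simp

private lemma omul_sub (c a b : Octonion) : c * (a - b) = c * a - c * b := by
  refine oext ?_ ?_ <;> apply Quaternion.ext <;> simp <;> ring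

private lemma omul_add (c a b : Octonion) : c * (a + b) = c * a + c * b := by
  refine oext ?_ ?_ <;> apply Quaternion.ext <;> simp <;> ring

private lemma omul_smul_one (σ : ℝ) (z : Octonion) : z * (σ • (1:Octonion)) = σ • z := by
  refine oext ?_ ?_ <;> apply Quaternion.ext <;> simp [smul_eq_mul] <;> ring

set_option maxHeartbeats 2000000 in
/-- `T` satisfies the commutation relation forced by the left associator identity. -/
private lemma TL1 (c x : Octonion) : e 1*(c*x) - (c*e 1)*x = T (c*x) - c * T x := by
  refine oext ?_ ?_ <;>
  · simp only [oT, oe1, omul_q1, omul_q2, osub_q1, osub_q2, oq1_mk, oq2_mk]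
    apply Quaternion.ext <;> simp [oT, oe1] <;> ring

set_option maxHeartbeats 2000000 in
/-- Octonion identity expressing the `q = e 1` left associator via left multiplications. -/
private lemma TL2 (q x : Octonion) :
    conj (e 1 * q) * x - conj (e 1) * (conj q * x)
      = e 1 * (conj q * x) - (conj q * e 1) * x := by
  refine oext ?_ ?_ <;>
  · simp only [oe1, omul_q1, omul_q2, osub_q1, osub_q2, oconj_q1, oconj_q2, oq1_mk, oq2_mk]
    apply Quaternion.ext <;> simp <;> ring

private lemma oe1_sq : e 1 * e 1 = -(1 : Octonion) := by
  refine oext ?_ ?_ <;> apply Quaternion.ext <;> simp [oe1]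

private lemma oL6 : conj (e 1 * e 1) * e 2 - conj (e 1) * (conj (e 1) * e 2) = 0 := by
  refine oext ?_ ?_ <;> apply Quaternion.ext <;> simp [oe1, oe2]

private lemma oT_e2 : T (e 2) = 0 := by
  refine oext ?_ ?_ <;> apply Quaternion.ext <;> simp [oT, oe2]

/-- The right nucleus of the octonions is the real line (with three explicit instances). -/
private lemma nucleus (s : Octonion)
    (h1 : (e 1 * e 2) * s = e 1 * (e 2 * s))
    (h2 : (e 1 * e 4) * s = e 1 * (e 4 * s))
    (h3 : (e 2 * e 4) * s = e 2 * (e 4 * s)) :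
    s = (q1 s).re • (1 : Octonion) := by
  have c1 := congrArg (fun z => (q2 z).re) h1
  have c2 := congrArg (fun z => (q2 z).imI) h1
  have c3 := congrArg (fun z => (q2 z).imJ) h1
  have c4 := congrArg (fun z => (q2 z).imK) h1
  have c5 := congrArg (fun z => (q2 z).imJ) h2
  have c6 := congrArg (fun z => (q2 z).imK) h2
  have c7 := congrArg (fun z => (q2 z).imK) h3
  simp [oe1, oe2, oe4'] at c1 c2 c3 c4 c5 c6 c7
  refine oext ?_ ?_ <;> apply Quaternion.ext <;> simp [smul_eq_mul] <;> linarith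

private lemma e2_ne : (e 2 : Octonion) ≠ 0 := by
  intro h
  have := congrArg (fun z => (q1 z).imJ) h
  simp [oe2] at this

end Aux

open Octonion in
/-- The conjugate regular left `𝕆`-module `𝕆̄` (left action `p ·̂ x = p̄ x`) admits
no alternative `𝕆`-bimodule structure: there is no `ℝ`-bilinear right action `R`
(`R x p = x · p`) with `x · 1 = x` making the left, middle and right associators
totally alternating. -/
theorem conjugate_regular_module_admits_no_bimodule_structure :
    ¬ ∃ R : Octonion →ₗ[ℝ] Octonion →ₗ[ℝ] Octonion,
        (∀ x : Octonion, R x 1 = x) ∧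
        (∀ p q x : Octonion,
          conj (p * q) * x - conj p * (conj q * x)
            = R (conj q * x) p - conj q * R x p) ∧
        (∀ p q x : Octonion,
          R (conj q * x) p - conj q * R x p
            = R (R x p) q - R x (p * q)) := by
  rintro ⟨R, hunit, hA, hB⟩
  -- Step 1: commutation. `S := R · e1 - T` commutes with all left multiplications.
  have key : ∀ c x : Octonion, R (c * x) (e 1) - c * R x (e 1) = T (c * x) - c * T x := by
    intro c x
    have h := hA (e 1) (conj c) x
    rw [oconj_conj] at h
    have h2 := TL2 (conj c) x
    rw [oconj_conj] at h2
    rw [← h, h2, TL1]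
  -- Step 2: `S c = c * s` where `s = S 1`.
  set s : Octonion := R 1 (e 1) - T 1 with hs
  have hS : ∀ c : Octonion, R c (e 1) - T c = c * s := by
    intro c
    have h := key c 1
    rw [omul_one] at h
    rw [hs, omul_sub]
    rw [sub_eq_sub_iff_sub_eq_sub] at h
    exact h
  -- Step 3: `s` lies in the right nucleus.
  have hnuc : ∀ c x : Octonion, (c * x) * s = c * (x * s) := by
    intro c x
    have h1 := hS (c * x)
    have h2 := hS x
    have h3 := key c x
    rw [sub_eq_iff_eq_add] at h1 h2
    rw [h1, h2, omul_add] at h3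
    rw [sub_eq_sub_iff_sub_eq_sub] at h3
    simp only [add_sub_cancel_right] at h3
    exact h3
  -- Step 4: hence `s` is real, so `R c e1 = T c + σ • c`.
  set σ : ℝ := (q1 s).re with hσ
  have hsr : s = σ • (1 : Octonion) :=
    nucleus s (hnuc (e 1) (e 2)) (hnuc (e 1) (e 4)) (hnuc (e 2) (e 4))
  have hRe2 : R (e 2) (e 1) = σ • e 2 := by
    have h := hS (e 2)
    rw [oT_e2, sub_zero, hsr, omul_smul_one] at h
    exact h
  -- Step 5: the right alternativity forces `σ² = -1`.
  have hsq : R (R (e 2) (e 1)) (e 1) = -(e 2) := by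
    have hA' := hA (e 1) (e 1) (e 2)
    have hB' := hB (e 1) (e 1) (e 2)
    rw [oL6] at hA'
    rw [← hA', oe1_sq] at hB'
    have : R (e 2) (-(1:Octonion)) = -(e 2) := by
      rw [map_neg, hunit]
    rw [this] at hB'
    rw [← sub_eq_zero]
    exact hB'.symm
  rw [hRe2, map_smul, LinearMap.smul_apply, hRe2, smul_smul] at hsq
  have hco := congrArg (fun z => (q1 z).imJ) hsq
  simp [oe2, oq1_mk, osmul_q1, oneg_q1, Quaternion.imJ_smul, Quaternion.imJ_neg, qmk_imJ,
    smul_eq_mul] at hco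
  nlinarith [sq_nonneg σ, hco]
end
end

section
/- Let M be an alternative O-bimodule over the octonions. Then the set of associative elements A(M) = {x ∈ M : [p,q,x] = 0 for all p,q ∈ O} equals the communicating center Z(M) = {x ∈ M : px = xp for all p ∈ O}. -/
noncomputable section

open scoped Quaternion

/-! ### Auxiliary computational lemmas about the octonions -/

namespace Octonion

lemma mul_def (x y : Octonion) : x * y =
    mk' (q1 x * q1 y - star (q2 y) * q2 x) (q2 y * q1 x + q2 x * star (q1 y)) := rfl

@[simp] lemma q1_mk' (a b : ℍ[ℝ]) : q1 (mk' a b) = a := rfl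
@[simp] lemma q2_mk' (a b : ℍ[ℝ]) : q2 (mk' a b) = b := rfl
@[simp] lemma fst_mk' (a b : ℍ[ℝ]) : Prod.fst (mk' a b) = a := rfl
@[simp] lemma snd_mk' (a b : ℍ[ℝ]) : Prod.snd (mk' a b) = b := rfl
@[simp] lemma fst_add (x y : Octonion) : Prod.fst (x + y) = Prod.fst x + Prod.fst y := rfl
@[simp] lemma snd_add (x y : Octonion) : Prod.snd (x + y) = Prod.snd x + Prod.snd y := rfl
@[simp] lemma fst_sub (x y : Octonion) : Prod.fst (x - y) = Prod.fst x - Prod.fst y := rfl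
@[simp] lemma snd_sub (x y : Octonion) : Prod.snd (x - y) = Prod.snd x - Prod.snd y := rfl
@[simp] lemma fst_smul (r : ℝ) (x : Octonion) : Prod.fst (r • x) = r • Prod.fst x := rfl
@[simp] lemma snd_smul (r : ℝ) (x : Octonion) : Prod.snd (r • x) = r • Prod.snd x := rfl
@[simp] lemma fst_neg (x : Octonion) : Prod.fst (-x) = -Prod.fst x := rfl
@[simp] lemma snd_neg (x : Octonion) : Prod.snd (-x) = -Prod.snd x := rfl

@[simp] lemma re_mk (a b c d : ℝ) : (⟨a,b,c,d⟩ : ℍ[ℝ]).re = a := rfl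
@[simp] lemma imI_mk (a b c d : ℝ) : (⟨a,b,c,d⟩ : ℍ[ℝ]).imI = b := rfl
@[simp] lemma imJ_mk (a b c d : ℝ) : (⟨a,b,c,d⟩ : ℍ[ℝ]).imJ = c := rfl
@[simp] lemma imK_mk (a b c d : ℝ) : (⟨a,b,c,d⟩ : ℍ[ℝ]).imK = d := rfl

/-- A quaternion from its four components, typed as `ℍ[ℝ]`. -/
def qmk (a b c d : ℝ) : ℍ[ℝ] := ⟨a,b,c,d⟩
@[simp] lemma qmk_re (a b c d : ℝ) : (qmk a b c d).re = a := rfl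
@[simp] lemma qmk_imI (a b c d : ℝ) : (qmk a b c d).imI = b := rfl
@[simp] lemma qmk_imJ (a b c d : ℝ) : (qmk a b c d).imJ = c := rfl
@[simp] lemma qmk_imK (a b c d : ℝ) : (qmk a b c d).imK = d := rfl

lemma e0_def : e 0 = mk' 1 0 := rfl
lemma e1_def : e 1 = mk' (qmk 0 1 0 0) 0 := rfl
lemma e2_def : e 2 = mk' (qmk 0 0 1 0) 0 := rfl
lemma e3_def : e 3 = mk' (qmk 0 0 0 1) 0 := rfl
lemma e4_def : e 4 = mk' 0 1 := rfl
lemma e5_def : e 5 = mk' 0 (qmk 0 1 0 0) := rfl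
lemma e6_def : e 6 = mk' 0 (qmk 0 0 1 0) := rfl
lemma e7_def : e 7 = mk' 0 (qmk 0 0 0 1) := rfl
lemma coord0_def (x : Octonion) : coord x 0 = (q1 x).re := rfl
lemma coord1_def (x : Octonion) : coord x 1 = (q1 x).imI := rfl
lemma coord2_def (x : Octonion) : coord x 2 = (q1 x).imJ := rfl
lemma coord3_def (x : Octonion) : coord x 3 = (q1 x).imK := rfl
lemma coord4_def (x : Octonion) : coord x 4 = (q2 x).re := rfl
lemma coord5_def (x : Octonion) : coord x 5 = (q2 x).imI := rfl
lemma coord6_def (x : Octonion) : coord x 6 = (q2 x).imJ := rfl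
lemma coord7_def (x : Octonion) : coord x 7 = (q2 x).imK := rfl

lemma e0_eq_one : e 0 = (1 : Octonion) := rfl

/-- Every octonion is the canonical combination of the basis. -/
lemma basis_repr (x : Octonion) :
    x = coord x 0 • e 0 + coord x 1 • e 1 + coord x 2 • e 2 + coord x 3 • e 3 +
        coord x 4 • e 4 + coord x 5 • e 5 + coord x 6 • e 6 + coord x 7 • e 7 := by
  refine Prod.ext ?_ ?_ <;>
    · ext <;>
        simp [e0_def, e1_def, e2_def, e3_def, e4_def, e5_def, e6_def, e7_def,
          coord0_def, coord1_def, coord2_def, coord3_def, coord4_def, coord5_def,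
          coord6_def, coord7_def, q1, q2]

lemma assoc1 : (e 2 * e 4) * e 7 - e 2 * (e 4 * e 7) = (-2 : ℝ) • e 1 := by
  refine Prod.ext ?_ ?_ <;>
    · ext <;>
        norm_num [mul_def, e1_def, e2_def, e4_def, e7_def, smul_eq_mul,
          Quaternion.re_mul, Quaternion.imI_mul, Quaternion.imJ_mul, Quaternion.imK_mul]

lemma assoc2 : (e 1 * e 4) * e 7 - e 1 * (e 4 * e 7) = (2 : ℝ) • e 2 := by
  refine Prod.ext ?_ ?_ <;>
    · ext <;>
        norm_num [mul_def, e1_def, e2_def, e4_def, e7_def, smul_eq_mul,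
          Quaternion.re_mul, Quaternion.imI_mul, Quaternion.imJ_mul, Quaternion.imK_mul]

lemma assoc3 : (e 1 * e 4) * e 6 - e 1 * (e 4 * e 6) = (-2 : ℝ) • e 3 := by
  refine Prod.ext ?_ ?_ <;>
    · ext <;>
        norm_num [mul_def, e1_def, e3_def, e4_def, e6_def, smul_eq_mul,
          Quaternion.re_mul, Quaternion.imI_mul, Quaternion.imJ_mul, Quaternion.imK_mul]

lemma assoc4 : (e 1 * e 2) * e 7 - e 1 * (e 2 * e 7) = (-2 : ℝ) • e 4 := by
  refine Prod.ext ?_ ?_ <;>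
    · ext <;>
        norm_num [mul_def, e1_def, e2_def, e4_def, e7_def, smul_eq_mul,
          Quaternion.re_mul, Quaternion.imI_mul, Quaternion.imJ_mul, Quaternion.imK_mul]

lemma assoc5 : (e 1 * e 2) * e 6 - e 1 * (e 2 * e 6) = (2 : ℝ) • e 5 := by
  refine Prod.ext ?_ ?_ <;>
    · ext <;>
        norm_num [mul_def, e1_def, e2_def, e5_def, e6_def, smul_eq_mul,
          Quaternion.re_mul, Quaternion.imI_mul, Quaternion.imJ_mul, Quaternion.imK_mul]

lemma assoc6 : (e 1 * e 2) * e 5 - e 1 * (e 2 * e 5) = (-2 : ℝ) • e 6 := by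
  refine Prod.ext ?_ ?_ <;>
    · ext <;>
        norm_num [mul_def, e1_def, e2_def, e5_def, e6_def, smul_eq_mul,
          Quaternion.re_mul, Quaternion.imI_mul, Quaternion.imJ_mul, Quaternion.imK_mul]

lemma assoc7 : (e 1 * e 2) * e 4 - e 1 * (e 2 * e 4) = (2 : ℝ) • e 7 := by
  refine Prod.ext ?_ ?_ <;>
    · ext <;>
        norm_num [mul_def, e1_def, e2_def, e4_def, e7_def, smul_eq_mul,
          Quaternion.re_mul, Quaternion.imI_mul, Quaternion.imJ_mul, Quaternion.imK_mul]

end Octonion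

open Octonion in
/-- In an alternative `𝕆`-bimodule `M` (with `M = 𝕆·A(M)`), the set of
associative elements `A(M)` equals the communicating center
`Z(M) = {x : px = xp ∀ p}`. -/
theorem octonion_bimodule_associative_eq_center
    {M : Type*} [AddCommGroup M] [Module ℝ M]
    (L R : Octonion →ₗ[ℝ] M →ₗ[ℝ] M)
    (hL1 : ∀ m : M, L 1 m = m) (hR1 : ∀ m : M, R 1 m = m)
    -- `[p,q,m] = [q,m,p]`
    (hLM : ∀ (p q : Octonion) (m : M),
      L (p * q) m - L p (L q m) = R p (L q m) - L q (R p m))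
    -- `[q,m,p] = [m,p,q]`
    (hMR : ∀ (p q : Octonion) (m : M),
      R p (L q m) - L q (R p m) = R q (R p m) - R (p * q) m)
    -- `M = 𝕆 · A(M)`
    (hspan : ∀ m : M, m ∈ Submodule.span ℝ
      {y : M | ∃ (p : Octonion) (x : M),
        (∀ a b : Octonion, L (a * b) x = L a (L b x)) ∧ y = L p x}) :
    {x : M | ∀ p q : Octonion, L (p * q) x = L p (L q x)}
      = {x : M | ∀ p : Octonion, L p x = R p x} := by
  ext x
  simp only [Set.mem_setOf_eq]
  constructor
  · -- associative ⇒ central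
    intro hx
    have c1 : ∀ p q : Octonion, R p (L q x) = L q (R p x) := by
      intro p q
      have h := hLM p q x
      rw [hx p q, sub_self] at h
      exact sub_eq_zero.mp h.symm
    have c2 : ∀ p q : Octonion, R q (R p x) = R (p * q) x := by
      intro p q
      have h := hMR p q x
      rw [c1 p q, sub_self] at h
      exact sub_eq_zero.mp h.symm
    have main : ∀ p q r : Octonion,
        L ((p*q)*r) x - L (p*(q*r)) x = R ((p*q)*r) x - R (p*(q*r)) x := by
      intro p q r
      calc L ((p*q)*r) x - L (p*(q*r)) x
          = L (p*q) (L r x) - L p (L q (L r x)) := by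
            rw [hx (p*q) r, hx p (q*r), hx q r]
        _ = R p (L q (L r x)) - L q (R p (L r x)) := hLM p q (L r x)
        _ = L (q*r) (R p x) - L q (L r (R p x)) := by
            rw [← hx q r, c1 p (q*r), c1 p r]
        _ = R q (L r (R p x)) - L r (R q (R p x)) := hLM q r (R p x)
        _ = R r (R q (R p x)) - R (q*r) (R p x) := hMR q r (R p x)
        _ = R ((p*q)*r) x - R (p*(q*r)) x := by
            rw [c2 p q, c2 (p*q) r, c2 p (q*r)]
    have msubL : ∀ u v : Octonion, L u x - L v x = L (u - v) x := by
      intro u v; rw [map_sub, LinearMap.sub_apply]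
    have msubR : ∀ u v : Octonion, R u x - R v x = R (u - v) x := by
      intro u v; rw [map_sub, LinearMap.sub_apply]
    have key : ∀ (u v w : Octonion) (c : ℝ) (l : Fin 8), c ≠ 0 →
        (u*v)*w - u*(v*w) = c • e l → L (e l) x = R (e l) x := by
      intro u v w c l hcne hprod
      have h := main u v w
      rw [msubL, msubR, hprod, map_smul, map_smul, LinearMap.smul_apply,
        LinearMap.smul_apply] at h
      calc L (e l) x = c⁻¹ • (c • L (e l) x) := by
            rw [smul_smul, inv_mul_cancel₀ hcne, one_smul]
        _ = c⁻¹ • (c • R (e l) x) := by rw [h]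
        _ = R (e l) x := by rw [smul_smul, inv_mul_cancel₀ hcne, one_smul]
    have hb0 : L (e 0) x = R (e 0) x := by
      rw [e0_eq_one, hL1 x, hR1 x]
    have hb1 : L (e 1) x = R (e 1) x := key _ _ _ _ _ (by norm_num) assoc1
    have hb2 : L (e 2) x = R (e 2) x := key _ _ _ _ _ (by norm_num) assoc2
    have hb3 : L (e 3) x = R (e 3) x := key _ _ _ _ _ (by norm_num) assoc3
    have hb4 : L (e 4) x = R (e 4) x := key _ _ _ _ _ (by norm_num) assoc4
    have hb5 : L (e 5) x = R (e 5) x := key _ _ _ _ _ (by norm_num) assoc5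
    have hb6 : L (e 6) x = R (e 6) x := key _ _ _ _ _ (by norm_num) assoc6
    have hb7 : L (e 7) x = R (e 7) x := key _ _ _ _ _ (by norm_num) assoc7
    intro p
    calc L p x
        = L (coord p 0 • e 0 + coord p 1 • e 1 + coord p 2 • e 2 + coord p 3 • e 3 +
            coord p 4 • e 4 + coord p 5 • e 5 + coord p 6 • e 6 + coord p 7 • e 7) x := by
          rw [← basis_repr p]
      _ = R (coord p 0 • e 0 + coord p 1 • e 1 + coord p 2 • e 2 + coord p 3 • e 3 +
            coord p 4 • e 4 + coord p 5 • e 5 + coord p 6 • e 6 + coord p 7 • e 7) x := by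
          simp only [map_add, map_smul, LinearMap.add_apply, LinearMap.smul_apply,
            hb0, hb1, hb2, hb3, hb4, hb5, hb6, hb7]
      _ = R p x := by rw [← basis_repr p]
  · -- central ⇒ associative
    intro hc p q
    have a1 := hLM p q x
    have a2 := hMR p q x
    have b1 := hLM q p x
    have b2 := hMR q p x
    simp only [← hc p, ← hc q, ← hc (p*q)] at a1 a2
    simp only [← hc p, ← hc q, ← hc (q*p)] at b1 b2
    linear_combination (norm := module)
      ((3:ℝ)⁻¹) • a1 + ((2:ℝ)/3) • a2 - ((3:ℝ)⁻¹) • b1 + ((3:ℝ)⁻¹) • b2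
end
end
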